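/- Let m ≥ 1 and 1 ≤ r ≤ m be integers. For every coefficient vector a (assigning an element of F₂ to each r-element subset of [m]), every r-element subset R of [m], and every subset S of [m] \ R, the sum over all subsets R₀ of R of f_a(R₀ ∪ S) equals a(R); that is, ∑_{R₀ ⊆ R} f_a(R₀ ∪ S) = a(R). -/
import Mathlib


/-- For every coefficient vector `a`, every `r`-element subset `R` of `[m]`,
and every subset `S ⊆ [m] \ R`, `∑_{R₀ ⊆ R} f_a(R₀ ∪ S) = a(R)`, where
`f_a(X) = ∑_{T ⊆ X, |T| = r} a(T)`. -/
theorem stmt_0 (m r : ℕ) (hm : 1 ≤ m) (hr : 1 ≤ r) (hrm : r ≤ m)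
    (a : Finset (Fin m) → ZMod 2)
    (R : Finset (Fin m)) (hR : R.card = r)
    (S : Finset (Fin m)) (hS : S ⊆ Finset.univ \ R) :
    ∑ R₀ ∈ R.powerset,
      (∑ T ∈ (R₀ ∪ S).powerset.filter (fun T => T.card = r), a T) = a R := by
  classical
  have hdisj : Disjoint R S := by
    rw [Finset.disjoint_right]
    intro x hxS hxR
    have := hS hxS
    simp only [Finset.mem_sdiff, Finset.mem_univ, true_and] at this
    exact this hxR
  set P := (R ∪ S).powerset.filter (fun T => T.card = r) with hP
  -- rewrite inner sums over common index set P
  have hinner : ∀ R₀ ∈ R.powerset,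
      (∑ T ∈ (R₀ ∪ S).powerset.filter (fun T => T.card = r), a T)
        = ∑ T ∈ P, if T ⊆ R₀ ∪ S then a T else 0 := by
    intro R₀ hR₀
    rw [Finset.mem_powerset] at hR₀
    rw [← Finset.sum_filter]
    congr 1
    ext T
    simp only [hP, Finset.mem_filter, Finset.mem_powerset]
    constructor
    · rintro ⟨h1, h2⟩
      exact ⟨⟨h1.trans (Finset.union_subset_union_left hR₀), h2⟩, h1⟩
    · rintro ⟨⟨_, h2⟩, h3⟩
      exact ⟨h3, h2⟩
  rw [Finset.sum_congr rfl hinner, Finset.sum_comm]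
  have key : ∀ T ∈ P,
      (∑ R₀ ∈ R.powerset, if T ⊆ R₀ ∪ S then a T else 0)
        = if T = R then a R else 0 := by
    intro T hT
    simp only [hP, Finset.mem_filter, Finset.mem_powerset] at hT
    obtain ⟨hTsub, hTcard⟩ := hT
    have hfilter : R.powerset.filter (fun R₀ => T ⊆ R₀ ∪ S) = Finset.Icc (T \ S) R := by
      ext R₀
      simp only [Finset.mem_filter, Finset.mem_powerset, Finset.mem_Icc]
      constructor
      · rintro ⟨h1, h2⟩
        refine ⟨fun x hx => ?_, h1⟩
        rw [Finset.mem_sdiff] at hx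
        rcases Finset.mem_union.mp (h2 hx.1) with h | h
        · exact h
        · exact absurd h hx.2
      · rintro ⟨h1, h2⟩
        refine ⟨h2, fun x hx => ?_⟩
        by_cases hxs : x ∈ S
        · exact Finset.mem_union_right _ hxs
        · exact Finset.mem_union_left _ (h1 (Finset.mem_sdiff.mpr ⟨hx, hxs⟩))
    have hTS_sub : T \ S ⊆ R := by
      intro x hx
      rw [Finset.mem_sdiff] at hx
      rcases Finset.mem_union.mp (hTsub hx.1) with h | h
      · exact h
      · exact absurd h hx.2
    rw [← Finset.sum_filter, hfilter, Finset.sum_const]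
    rw [Finset.card_Icc_finset hTS_sub]
    by_cases hTR : T = R
    · subst hTR
      rw [Finset.sdiff_eq_self_of_disjoint hdisj]
      simp
    · simp only [hTR, if_false]
      have hlt : (T \ S).card < r := by
        rcases lt_or_eq_of_le (Finset.card_le_card (Finset.sdiff_subset : T \ S ⊆ T)) with h | h
        · omega
        · exfalso
          have hTS : T \ S = T := Finset.eq_of_subset_of_card_le Finset.sdiff_subset (le_of_eq h.symm)
          have : T ⊆ R := hTS ▸ hTS_sub
          exact hTR (Finset.eq_of_subset_of_card_le this (by omega))
      rw [nsmul_eq_mul]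
      push_cast
      rw [show ((2:ZMod 2)) = 0 from rfl, zero_pow (by omega), zero_mul]
  rw [Finset.sum_congr rfl key]
  rw [Finset.sum_ite_eq' P R (fun _ => a R)]
  have hRP : R ∈ P :=
    Finset.mem_filter.mpr ⟨Finset.mem_powerset.mpr Finset.subset_union_left, hR⟩
  simp [hRP]
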